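/- Let B̃ = [B; C] be an m×n matrix of full rank, extended to an invertible m×m matrix M = [B̃ Ẽ] where Ẽ = [E; F]. Let D be a skew-symmetriser of B. Then the matrix Λ₀ = M⁻ᵀ [[DB, DE], [−EᵀD, 0]] M⁻¹ is skew-symmetric and satisfies B̃ᵀΛ₀ = [D 0]. -/

import Mathlib

open Matrix

/-- With `B̃ = [B; C]` of full rank completed to an invertible matrix
`M = [B̃ Ẽ]`, `Ẽ = [E; F]`, and `D` a skew-symmetriser of `B`, the matrix
`Λ₀ = M⁻ᵀ [[DB, DE], [-EᵀD, 0]] M⁻¹` is skew-symmetric and satisfies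
`B̃ᵀ Λ₀ = [D 0]`. -/
theorem quantisation_construction (n k : ℕ)
    (B : Matrix (Fin n) (Fin n) ℚ) (C : Matrix (Fin k) (Fin n) ℚ)
    (E : Matrix (Fin n) (Fin k) ℚ) (F : Matrix (Fin k) (Fin k) ℚ)
    (hrank : (Matrix.fromRows B C).rank = n)
    (d : Fin n → ℚ) (hd : ∀ i, 0 < d i)
    (hskew : (Matrix.diagonal d * B).transpose = -(Matrix.diagonal d * B))
    (M : Matrix (Fin n ⊕ Fin k) (Fin n ⊕ Fin k) ℚ)
    (hM : M = Matrix.fromCols (Matrix.fromRows B C) (Matrix.fromRows E F))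
    (hMunit : IsUnit M.det)
    (Λ₀ : Matrix (Fin n ⊕ Fin k) (Fin n ⊕ Fin k) ℚ)
    (hΛ₀ : Λ₀ = M⁻¹.transpose *
        Matrix.fromBlocks (Matrix.diagonal d * B) (Matrix.diagonal d * E)
          (-(E.transpose * Matrix.diagonal d)) 0 * M⁻¹) :
    Λ₀.transpose = -Λ₀ ∧
      (Matrix.fromRows B C).transpose * Λ₀ =
        Matrix.fromCols (Matrix.diagonal d) 0 := by
  set N := Matrix.fromBlocks (Matrix.diagonal d * B) (Matrix.diagonal d * E)
      (-(E.transpose * Matrix.diagonal d)) 0 with hN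
  have hNT : N.transpose = -N := by
    rw [hN]
    simp [fromBlocks_transpose, hskew, transpose_mul, Matrix.fromBlocks_neg]
  have hinv : M.transpose * M⁻¹.transpose = 1 := by
    rw [← transpose_mul, Matrix.nonsing_inv_mul M hMunit, transpose_one]
  constructor
  · rw [hΛ₀]
    simp only [transpose_mul, transpose_transpose, hNT, Matrix.mul_assoc,
      Matrix.neg_mul, Matrix.mul_neg]
  · have hBt : (Matrix.fromRows B C).transpose =
        Matrix.fromCols (1 : Matrix (Fin n) (Fin n) ℚ)
          (0 : Matrix (Fin n) (Fin k) ℚ) * M.transpose := by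
      rw [hM, transpose_fromCols, transpose_fromRows, transpose_fromRows,
        fromRows_fromCols_eq_fromBlocks, fromCols_mul_fromBlocks]
      simp
    have hDM : Matrix.fromCols (Matrix.diagonal d)
          (0 : Matrix (Fin n) (Fin k) ℚ) * M =
        Matrix.fromCols (Matrix.diagonal d * B) (Matrix.diagonal d * E) := by
      rw [hM, fromCols_fromRows_eq_fromBlocks, fromCols_mul_fromBlocks]
      simp
    have key : Matrix.fromCols (1 : Matrix (Fin n) (Fin n) ℚ)
          (0 : Matrix (Fin n) (Fin k) ℚ) * N =
        Matrix.fromCols (Matrix.diagonal d * B) (Matrix.diagonal d * E) := by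
      rw [hN, fromCols_mul_fromBlocks]
      simp
    have step : (Matrix.fromRows B C).transpose * Λ₀ =
        Matrix.fromCols (1 : Matrix (Fin n) (Fin n) ℚ)
            (0 : Matrix (Fin n) (Fin k) ℚ) * (M.transpose * M⁻¹.transpose) *
          (N * M⁻¹) := by
      rw [hΛ₀, hBt]
      simp only [Matrix.mul_assoc]
    rw [step, hinv, Matrix.mul_one, ← Matrix.mul_assoc, key, ← hDM,
      Matrix.mul_assoc, Matrix.mul_nonsing_inv M hMunit, Matrix.mul_one]
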